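/- Let K ⊆ ℝⁿ be a nonempty compact convex set with facet description K = ⋂_{i=1}^m {z ∈ ℝⁿ : ⟨hᵢ, z⟩ ≤ bᵢ}, where h₁,…,h_m ∈ ℝⁿ are nonzero and b₁,…,b_m ∈ ℝ, and let y ∈ ℝⁿ be nonzero with y ∈ pos(K). Then: (a) J(y) ≠ ∅; (b) J₁(y) ≠ ∅; (c) 0 ∉ F(y), where F(y) = K ∩ {z : ⟨hᵢ, z⟩ = bᵢ for all i ∈ J(y)}; and (d) every extreme point of F(y) belongs to ℳ(y) = {x : x is an extreme point of K and ⟨hᵢ, x⟩ = bᵢ for some i ∈ J₁(y)}. -/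

import Mathlib

open Finset RealInnerProductSpace Pointwise

noncomputable section

/-- The active index set `J(y)` of the facet description `⟨hᵢ, ·⟩ ≤ bᵢ` of `K` at `y`. -/
def activeJ {n m : ℕ} (h : Fin m → EuclideanSpace ℝ (Fin n)) (b : Fin m → ℝ)
    (K : Set (EuclideanSpace ℝ (Fin n))) (y : EuclideanSpace ℝ (Fin n)) : Set (Fin m) :=
  {i | ⟪h i, y⟫ = b i * gauge K y}

/-- `J₁(y)`: active indices with `bᵢ ≠ 0`. -/
def activeJ1 {n m : ℕ} (h : Fin m → EuclideanSpace ℝ (Fin n)) (b : Fin m → ℝ)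
    (K : Set (EuclideanSpace ℝ (Fin n))) (y : EuclideanSpace ℝ (Fin n)) : Set (Fin m) :=
  {i | i ∈ activeJ h b K y ∧ b i ≠ 0}

/-- The face `F(y) = K ∩ {z : ⟨hᵢ, z⟩ = bᵢ for all i ∈ J(y)}`. -/
def faceF {n m : ℕ} (h : Fin m → EuclideanSpace ℝ (Fin n)) (b : Fin m → ℝ)
    (K : Set (EuclideanSpace ℝ (Fin n))) (y : EuclideanSpace ℝ (Fin n)) :
    Set (EuclideanSpace ℝ (Fin n)) :=
  K ∩ {z | ∀ i ∈ activeJ h b K y, ⟪h i, z⟫ = b i}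

/-- `ℳ(y)`: extreme points of `K` lying on a facet indexed by `J₁(y)`. -/
def facetVerM {n m : ℕ} (h : Fin m → EuclideanSpace ℝ (Fin n)) (b : Fin m → ℝ)
    (K : Set (EuclideanSpace ℝ (Fin n))) (y : EuclideanSpace ℝ (Fin n)) :
    Set (EuclideanSpace ℝ (Fin n)) :=
  {z | z ∈ Set.extremePoints ℝ K ∧ ∃ i ∈ activeJ1 h b K y, ⟪h i, z⟫ = b i}

theorem stmt15 {n m : ℕ}
    (K : Set (EuclideanSpace ℝ (Fin n)))
    (hKne : K.Nonempty) (hKcomp : IsCompact K) (hKconv : Convex ℝ K)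
    (h : Fin m → EuclideanSpace ℝ (Fin n)) (b : Fin m → ℝ)
    (hh : ∀ i, h i ≠ 0)
    (hfacet : K = ⋂ i, {z : EuclideanSpace ℝ (Fin n) | ⟪h i, z⟫ ≤ b i})
    (y : EuclideanSpace ℝ (Fin n)) (hy : y ≠ 0)
    (hypos : ∃ lam : ℝ, 0 < lam ∧ y ∈ lam • K) :
    (activeJ h b K y).Nonempty ∧
      (activeJ1 h b K y).Nonempty ∧
      (0 : EuclideanSpace ℝ (Fin n)) ∉ faceF h b K y ∧
      Set.extremePoints ℝ (faceF h b K y) ⊆ facetVerM h b K y := by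
  obtain ⟨lam, hlam, hylam⟩ := hypos
  obtain ⟨R0, hR0⟩ := hKcomp.isBounded.exists_norm_le
  set R : ℝ := max R0 1 with hRdef
  have hRpos : (0:ℝ) < R := lt_of_lt_of_le one_pos (le_max_right _ _)
  have hRb : ∀ x ∈ K, ‖x‖ ≤ R := fun x hx => (hR0 x hx).trans (le_max_left _ _)
  have hynorm : 0 < ‖y‖ := norm_pos_iff.mpr hy
  have hKmem : ∀ x : EuclideanSpace ℝ (Fin n), x ∈ K ↔ ∀ i, ⟪h i, x⟫ ≤ b i := by
    intro x; rw [hfacet, Set.mem_iInter]; simp only [Set.mem_setOf_eq]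
  have hmem : ∀ r : ℝ, 0 < r → (y ∈ r • K ↔ ∀ i, ⟪h i, y⟫ ≤ b i * r) := by
    intro r hr
    rw [Set.mem_smul_set_iff_inv_smul_mem₀ hr.ne' K y, hKmem]
    apply forall_congr'
    intro i
    rw [real_inner_smul_right]
    rw [inv_mul_le_iff₀' hr]
  set S : Set ℝ := {r : ℝ | 0 < r ∧ y ∈ r • K} with hSdef
  have hSne : S.Nonempty := ⟨lam, hlam, hylam⟩
  have hSbdd : BddBelow S := ⟨0, fun r hr => hr.1.le⟩
  have hlb : ∀ r ∈ S, ‖y‖ / R ≤ r := by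
    rintro r ⟨hr, hyr⟩
    obtain ⟨k, hk, rfl⟩ := hyr
    rw [div_le_iff₀ hRpos, norm_smul, Real.norm_eq_abs, abs_of_pos hr]
    exact mul_le_mul_of_nonneg_left (hRb k hk) hr.le
  have hSeq : S = {r : ℝ | ‖y‖ / R ≤ r ∧ ∀ i, ⟪h i, y⟫ ≤ b i * r} := by
    ext r
    constructor
    · intro hr
      exact ⟨hlb r hr, (hmem r hr.1).1 hr.2⟩
    · rintro ⟨h1, h2⟩
      have hrpos : 0 < r := lt_of_lt_of_le (div_pos hynorm hRpos) h1
      exact ⟨hrpos, (hmem r hrpos).2 h2⟩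
  have hSclosed : IsClosed S := by
    rw [hSeq]
    have : {r : ℝ | ‖y‖ / R ≤ r ∧ ∀ i, ⟪h i, y⟫ ≤ b i * r} =
        Set.Ici (‖y‖ / R) ∩ ⋂ i, {r : ℝ | ⟪h i, y⟫ ≤ b i * r} := by
      ext r; simp [Set.mem_iInter, Set.mem_Ici, and_comm]
    rw [this]
    exact isClosed_Ici.inter (isClosed_iInter fun i =>
      isClosed_le continuous_const (continuous_const.mul continuous_id))
  set ξ : ℝ := sInf S with hxidef
  have hgauge : gauge K y = ξ := rfl
  have hxiS : ξ ∈ S := hSclosed.csInf_mem hSne hSbdd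
  have hxipos : 0 < ξ := hxiS.1
  have hle : ∀ i, ⟪h i, y⟫ ≤ b i * ξ := (hmem ξ hxipos).1 hxiS.2
  -- part (b) : J₁ nonempty
  have hJ1 : ∃ i, ⟪h i, y⟫ = b i * ξ ∧ b i ≠ 0 := by
    by_contra hcon
    push_neg at hcon
    have hev : ∀ i : Fin m, ∀ᶠ s : ℝ in nhds 1, s * ⟪h i, y⟫ ≤ b i * ξ := by
      intro i
      rcases lt_or_eq_of_le (hle i) with hlt | heq
      · have hopen : IsOpen {s : ℝ | s * ⟪h i, y⟫ < b i * ξ} :=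
          isOpen_lt (continuous_id.mul continuous_const) continuous_const
        have h1 : (1:ℝ) ∈ {s : ℝ | s * ⟪h i, y⟫ < b i * ξ} := by
          simpa using hlt
        filter_upwards [hopen.mem_nhds h1] with s hs using hs.le
      · have hb0 : b i = 0 := hcon i heq
        have hc0 : ⟪h i, y⟫ = 0 := by rw [heq, hb0, zero_mul]
        filter_upwards with s
        rw [hc0, hb0, mul_zero, zero_mul]
    have hall : ∀ᶠ s : ℝ in nhds 1, ∀ i, s * ⟪h i, y⟫ ≤ b i * ξ :=
      (Filter.eventually_all).2 hev
    have h2 : ∀ᶠ s : ℝ in nhdsWithin 1 (Set.Ioi 1),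
        (s ∈ Set.Ioi (1:ℝ) ∧ ∀ i, s * ⟪h i, y⟫ ≤ b i * ξ) :=
      eventually_mem_nhdsWithin.and (hall.filter_mono nhdsWithin_le_nhds)
    obtain ⟨s, hs1, hsP⟩ := h2.exists
    have h2 : ∀ᶠ s : ℝ in nhdsWithin 1 (Set.Ioi 1),
        (s ∈ Set.Ioi (1:ℝ) ∧ ∀ i, s * ⟪h i, y⟫ ≤ b i * ξ) :=
      eventually_mem_nhdsWithin.and (hall.filter_mono nhdsWithin_le_nhds)
    obtain ⟨s, hs1, hsP⟩ := h2.exists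
    rw [Set.mem_Ioi] at hs1
    have hspos : (0:ℝ) < s := lt_trans one_pos hs1
    have hmemS : ξ / s ∈ S := by
      refine ⟨div_pos hxipos hspos, (hmem _ (div_pos hxipos hspos)).2 ?_⟩
      intro i
      rw [← mul_div_assoc, le_div_iff₀ hspos, mul_comm]
      exact hsP i
    have h3 : ξ ≤ ξ / s := csInf_le hSbdd hmemS
    have h4 : ξ / s < ξ := div_lt_self hxipos hs1
    linarith
  obtain ⟨i0, hi0eq, hi0b⟩ := hJ1
  have hi0J : i0 ∈ activeJ h b K y := by
    show ⟪h i0, y⟫ = b i0 * gauge K y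
    rw [hgauge]; exact hi0eq
  have hi0J1 : i0 ∈ activeJ1 h b K y := ⟨hi0J, hi0b⟩
  -- the face is an extreme subset of K
  have hext : IsExtreme ℝ K (faceF h b K y) := by
    constructor
    · exact Set.inter_subset_left
    · rintro x1 hx1 x2 hx2 x ⟨hxK, hxEq⟩ hseg
      obtain ⟨a, c, ha, hc, hac, hsum⟩ := hseg
      have key : ∀ i ∈ activeJ h b K y, ⟪h i, x1⟫ = b i ∧ ⟪h i, x2⟫ = b i := by
        intro i hi
        have h1 : ⟪h i, x1⟫ ≤ b i := (hKmem x1).1 hx1 i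
        have h2 : ⟪h i, x2⟫ ≤ b i := (hKmem x2).1 hx2 i
        have h3 : a * ⟪h i, x1⟫ + c * ⟪h i, x2⟫ = b i := by
          rw [← hxEq i hi, ← hsum, inner_add_right, real_inner_smul_right,
            real_inner_smul_right]
        have h6 : a * b i + c * b i = b i := by rw [← add_mul, hac, one_mul]
        constructor
        · have h4 : c * ⟪h i, x2⟫ ≤ c * b i := mul_le_mul_of_nonneg_left h2 hc.le
          have h5 : a * b i ≤ a * ⟪h i, x1⟫ := by linarith
          exact le_antisymm h1 (le_of_mul_le_mul_left h5 ha)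
        · have h4 : a * ⟪h i, x1⟫ ≤ a * b i := mul_le_mul_of_nonneg_left h1 ha.le
          have h5 : c * b i ≤ c * ⟪h i, x2⟫ := by linarith
          exact le_antisymm h2 (le_of_mul_le_mul_left h5 hc)
      exact ⟨hx1, fun i hi => (key i hi).1⟩
  refine ⟨⟨i0, hi0J⟩, ⟨i0, hi0J1⟩, ?_, ?_⟩
  · rintro ⟨-, hzero⟩
    have := hzero i0 hi0J
    rw [inner_zero_right] at this
    exact hi0b this.symm
  · intro z hz
    have hzF : z ∈ faceF h b K y := hz.1
    exact ⟨hext.extremePoints_subset_extremePoints hz, i0, hi0J1, hzF.2 i0 hi0J⟩
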